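/- Propositional resolution is refutation complete for finite clause sets: if a finite set of clauses over finitely many propositional variables is unsatisfiable, then the empty clause is derivable from it by the resolution rule. -/
import Mathlib

inductive Lit (n : ℕ) : Type
  | pos (i : Fin n)
  | neg (i : Fin n)
deriving DecidableEq

abbrev Clause (n : ℕ) := Finset (Lit n)

def Lit.sat {n : ℕ} (v : Fin n → Bool) : Lit n → Prop
  | .pos i => v i = true
  | .neg i => v i = false

def satClause {n : ℕ} (v : Fin n → Bool) (C : Clause n) : Prop :=
  ∃ l ∈ C, l.sat v

def satSet {n : ℕ} (v : Fin n → Bool) (S : Set (Clause n)) : Prop :=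
  ∀ C ∈ S, satClause v C

inductive Res {n : ℕ} (S : Set (Clause n)) : Clause n → Prop
  | init {C : Clause n} : C ∈ S → Res S C
  | res {C D : Clause n} {p : Fin n} :
      Res S (C ∪ {Lit.pos p}) → Res S (D ∪ {Lit.neg p}) → Res S (C ∪ D)

def up {n : ℕ} : Lit n → Lit (n+1)
  | .pos i => .pos i.castSucc
  | .neg i => .neg i.castSucc

def down {n : ℕ} : Lit (n+1) → Option (Lit n)
  | .pos i => if h : i = Fin.last n then none else some (.pos (i.castPred h))
  | .neg i => if h : i = Fin.last n then none else some (.neg (i.castPred h))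

lemma down_eq_some {n : ℕ} {l : Lit (n+1)} {m : Lit n} :
    down l = some m ↔ l = up m := by
  cases l <;> cases m <;> simp only [down, up] <;> split <;>
    simp_all [Fin.ext_iff] <;> omega

lemma down_inj {n : ℕ} : ∀ (a a' : Lit (n+1)) (b : Lit n),
    b ∈ down a → b ∈ down a' → a = a' := by
  intro a a' b h h'
  rw [Option.mem_def, down_eq_some] at h h'
  rw [h, h']

def restrict {n : ℕ} (C : Clause (n+1)) : Clause n :=
  C.filterMap down down_inj

lemma mem_restrict {n : ℕ} {C : Clause (n+1)} {m : Lit n} :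
    m ∈ restrict C ↔ up m ∈ C := by
  simp only [restrict, Finset.mem_filterMap, down_eq_some]
  constructor
  · rintro ⟨l, hl, rfl⟩; exact hl
  · intro h; exact ⟨up m, h, rfl⟩

lemma sat_up {n : ℕ} {v : Fin n → Bool} {b : Bool} {m : Lit n} :
    (up m).sat (Fin.snoc v b) ↔ m.sat v := by
  cases m <;> simp [up, Lit.sat, Fin.snoc_castSucc]

/-- The lifting lemma: a resolution derivation from projected clauses lifts to
a derivation from the original clauses, up to the extra literal `L`. -/
lemma lift {n : ℕ} (S : Finset (Clause (n+1))) (T : Finset (Clause n))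
    (L : Lit (n+1))
    (hT : ∀ D ∈ T, ∃ C ∈ S, C ⊆ D.image up ∪ {L})
    {D : Clause n} (hD : Res ↑T D) :
    ∃ E ⊆ D.image up ∪ {L}, Res (↑S : Set (Clause (n+1))) E := by
  induction hD with
  | init h =>
    obtain ⟨C, hC, hsub⟩ := hT _ h
    exact ⟨C, hsub, .init hC⟩
  | @res C D q h1 h2 ih1 ih2 =>
    obtain ⟨E₁, s₁, r₁⟩ := ih1
    obtain ⟨E₂, s₂, r₂⟩ := ih2
    rw [Finset.image_union] at s₁ s₂
    by_cases hp : Lit.pos q.castSucc ∈ E₁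
    · by_cases hn : Lit.neg q.castSucc ∈ E₂
      · refine ⟨E₁.erase (Lit.pos q.castSucc) ∪ E₂.erase (Lit.neg q.castSucc), ?_, ?_⟩
        · rw [Finset.image_union]
          intro x hx
          rcases Finset.mem_union.mp hx with hx | hx
          · obtain ⟨hne, hxe⟩ := Finset.mem_erase.mp hx
            have := s₁ hxe
            simp only [Finset.image_singleton, up, Finset.mem_union,
              Finset.mem_singleton] at this ⊢
            tauto
          · obtain ⟨hne, hxe⟩ := Finset.mem_erase.mp hx
            have := s₂ hxe
            simp only [Finset.image_singleton, up, Finset.mem_union,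
              Finset.mem_singleton] at this ⊢
            tauto
        · have e1 : E₁ = E₁.erase (Lit.pos q.castSucc) ∪ {Lit.pos q.castSucc} := by
            ext y
            by_cases hy : y = Lit.pos q.castSucc <;>
              simp [hy, hp, Finset.mem_erase, Finset.mem_union]
          have e2 : E₂ = E₂.erase (Lit.neg q.castSucc) ∪ {Lit.neg q.castSucc} := by
            ext y
            by_cases hy : y = Lit.neg q.castSucc <;>
              simp [hy, hn, Finset.mem_erase, Finset.mem_union]
          rw [e1] at r₁; rw [e2] at r₂
          exact Res.res r₁ r₂
      · refine ⟨E₂, ?_, r₂⟩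
        rw [Finset.image_union]
        intro x hx
        have := s₂ hx
        have hne : x ≠ Lit.neg q.castSucc := fun h => hn (h ▸ hx)
        simp only [Finset.image_singleton, up, Finset.mem_union, Finset.mem_singleton] at this ⊢
        tauto
    · refine ⟨E₁, ?_, r₁⟩
      rw [Finset.image_union]
      intro x hx
      have := s₁ hx
      have hne : x ≠ Lit.pos q.castSucc := fun h => hp (h ▸ hx)
      simp only [Finset.image_singleton, up, Finset.mem_union, Finset.mem_singleton] at this ⊢
      tauto

lemma resolution_complete_aux : ∀ (n : ℕ) (S : Finset (Clause n)),
    (¬ ∃ v : Fin n → Bool, ∀ C ∈ S, satClause v C) →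
    Res (↑S : Set (Clause n)) (∅ : Clause n) := by
  intro n
  induction n with
  | zero =>
    intro S hunsat
    push_neg at hunsat
    obtain ⟨C, hC, hns⟩ := hunsat (fun i => i.elim0)
    have : C = ∅ := Finset.eq_empty_of_forall_notMem (fun l _ => by
      cases l with
      | pos i => exact i.elim0
      | neg i => exact i.elim0)
    exact this ▸ Res.init hC
  | succ n ih =>
    intro S hunsat
    set p := Fin.last n with hpdef
    set T : Finset (Clause n) :=
      (S.filter (fun C => Lit.pos p ∉ C)).image
        (fun C => restrict (C.erase (Lit.neg p))) with hT
    set U : Finset (Clause n) :=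
      (S.filter (fun C => Lit.neg p ∉ C)).image
        (fun C => restrict (C.erase (Lit.pos p))) with hU
    -- unsat of T (setting p := true)
    have unsatT : ¬ ∃ v : Fin n → Bool, ∀ C ∈ T, satClause v C := by
      rintro ⟨v, hv⟩
      apply hunsat
      refine ⟨Fin.snoc v true, fun C hC => ?_⟩
      by_cases hc : Lit.pos p ∈ C
      · exact ⟨Lit.pos p, hc, by simp [Lit.sat, hpdef, Fin.snoc_last]⟩
      · have hmem : restrict (C.erase (Lit.neg p)) ∈ T := by
          rw [hT]
          exact Finset.mem_image_of_mem _ (Finset.mem_filter.mpr ⟨hC, hc⟩)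
        obtain ⟨m, hm, hms⟩ := hv _ hmem
        rw [mem_restrict] at hm
        exact ⟨up m, Finset.mem_of_mem_erase hm, sat_up.mpr hms⟩
    have unsatU : ¬ ∃ v : Fin n → Bool, ∀ C ∈ U, satClause v C := by
      rintro ⟨v, hv⟩
      apply hunsat
      refine ⟨Fin.snoc v false, fun C hC => ?_⟩
      by_cases hc : Lit.neg p ∈ C
      · exact ⟨Lit.neg p, hc, by simp [Lit.sat, hpdef, Fin.snoc_last]⟩
      · have hmem : restrict (C.erase (Lit.pos p)) ∈ U := by
          rw [hU]
          exact Finset.mem_image_of_mem _ (Finset.mem_filter.mpr ⟨hC, hc⟩)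
        obtain ⟨m, hm, hms⟩ := hv _ hmem
        rw [mem_restrict] at hm
        exact ⟨up m, Finset.mem_of_mem_erase hm, sat_up.mpr hms⟩
    have hTlift : ∀ D ∈ T, ∃ C ∈ S, C ⊆ D.image up ∪ {Lit.neg p} := by
      intro D hD
      rw [hT, Finset.mem_image] at hD
      obtain ⟨C, hC, rfl⟩ := hD
      obtain ⟨hCS, hCp⟩ := Finset.mem_filter.mp hC
      refine ⟨C, hCS, fun l hl => ?_⟩
      by_cases hln : l = Lit.neg p
      · exact Finset.mem_union_right _ (Finset.mem_singleton.mpr hln)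
      · refine Finset.mem_union_left _ ?_
        have hd : ∃ m, down l = some m := by
          cases l with
          | pos i =>
            have : i ≠ Fin.last n := by rintro rfl; exact hCp hl
            exact ⟨.pos (i.castPred this), by simp [down, this]⟩
          | neg i =>
            have : i ≠ Fin.last n := by rintro rfl; exact hln rfl
            exact ⟨.neg (i.castPred this), by simp [down, this]⟩
        obtain ⟨m, hm⟩ := hd
        rw [down_eq_some] at hm
        subst hm
        exact Finset.mem_image_of_mem _ (mem_restrict.mpr
          (Finset.mem_erase.mpr ⟨by simpa [up] using hln, hl⟩))
    have hUlift : ∀ D ∈ U, ∃ C ∈ S, C ⊆ D.image up ∪ {Lit.pos p} := by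
      intro D hD
      rw [hU, Finset.mem_image] at hD
      obtain ⟨C, hC, rfl⟩ := hD
      obtain ⟨hCS, hCp⟩ := Finset.mem_filter.mp hC
      refine ⟨C, hCS, fun l hl => ?_⟩
      by_cases hln : l = Lit.pos p
      · exact Finset.mem_union_right _ (Finset.mem_singleton.mpr hln)
      · refine Finset.mem_union_left _ ?_
        have hd : ∃ m, down l = some m := by
          cases l with
          | pos i =>
            have : i ≠ Fin.last n := by rintro rfl; exact hln rfl
            exact ⟨.pos (i.castPred this), by simp [down, this]⟩
          | neg i =>
            have : i ≠ Fin.last n := by rintro rfl; exact hCp hl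
            exact ⟨.neg (i.castPred this), by simp [down, this]⟩
        obtain ⟨m, hm⟩ := hd
        rw [down_eq_some] at hm
        subst hm
        exact Finset.mem_image_of_mem _ (mem_restrict.mpr
          (Finset.mem_erase.mpr ⟨by simpa [up] using hln, hl⟩))
    obtain ⟨E₁, hE₁, rE₁⟩ := lift S T (Lit.neg p) hTlift (ih T unsatT)
    obtain ⟨E₂, hE₂, rE₂⟩ := lift S U (Lit.pos p) hUlift (ih U unsatU)
    simp only [Finset.image_empty, Finset.empty_union] at hE₁ hE₂
    rcases Finset.subset_singleton_iff.mp hE₁ with rfl | rfl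
    · exact rE₁
    rcases Finset.subset_singleton_iff.mp hE₂ with rfl | rfl
    · exact rE₂
    have h1 : Res (↑S : Set (Clause (n+1))) ((∅ : Clause (n+1)) ∪ {Lit.pos p}) := by
      simpa using rE₂
    have h2 : Res (↑S : Set (Clause (n+1))) ((∅ : Clause (n+1)) ∪ {Lit.neg p}) := by
      simpa using rE₁
    simpa using Res.res h1 h2

/-- Refutation completeness of propositional resolution for finite clause sets. -/
theorem resolution_complete (n : ℕ) (S : Finset (Clause n))
    (hunsat : ¬ ∃ v : Fin n → Bool, ∀ C ∈ S, satClause v C) :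
    Res (↑S : Set (Clause n)) (∅ : Clause n) := by
  exact resolution_complete_aux n S hunsat
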